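/- Let n ≥ 1 and consider the real symplectic Lie algebra sp(2n,ℝ) = { X ∈ M_{2n}(ℝ) : XᵀJ + JX = 0 }, where J is the standard symplectic form matrix with block form J = [[0, I_n],[−I_n, 0]], with bracket the matrix commutator. For every ν with 1 ≤ ν ≤ n, the matrix h_{νν} = E(ν,ν) − E(ν+n,ν+n) is an essential element of sp(2n,ℝ). -/

import Mathlib

open Matrix

attribute [local instance 100] LieRing.ofAssociativeRing

/-- The linear span of all brackets `⁅a, b⁆` with `a ∈ A`, `b ∈ B`. -/
def bracketSpan {L : Type*} [LieRing L] [LieAlgebra ℝ L] (A B : Submodule ℝ L) :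
    Submodule ℝ L :=
  Submodule.span ℝ {x | ∃ a ∈ A, ∃ b ∈ B, x = ⁅a, b⁆}

/-- `m` is essential: `ad m` is diagonalizable over `ℝ` and
`ℝ·m + [m,g] + [[m,g],[m,g]] = g`. -/
def Essential {L : Type*} [LieRing L] [LieAlgebra ℝ L] (m : L) : Prop :=
  (⨆ c : ℝ, (LieAlgebra.ad ℝ L m).eigenspace c) = ⊤ ∧
    Submodule.span ℝ {m} ⊔ LinearMap.range (LieAlgebra.ad ℝ L m) ⊔
      bracketSpan (LinearMap.range (LieAlgebra.ad ℝ L m))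
        (LinearMap.range (LieAlgebra.ad ℝ L m)) = ⊤

/-- The real Lie algebra of matrices `X` with `Xᵀ * J + J * X = 0`. -/
def lieSO {ι : Type*} [Fintype ι] [DecidableEq ι] (J : Matrix ι ι ℝ) :
    LieSubalgebra ℝ (Matrix ι ι ℝ) where
  carrier := {X | Xᵀ * J + J * X = 0}
  zero_mem' := by simp
  add_mem' := by
    intro a b ha hb
    simp only [Set.mem_setOf_eq] at ha hb ⊢
    rw [transpose_add, add_mul, mul_add, add_add_add_comm, ha, hb, add_zero]
  smul_mem' := by
    intro r X hX
    simp only [Set.mem_setOf_eq] at hX ⊢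
    rw [transpose_smul, smul_mul, Matrix.mul_smul, ← smul_add, hX, smul_zero]
  lie_mem' := by
    intro X Y hX hY
    simp only [Set.mem_setOf_eq] at hX hY ⊢
    have hX' : Xᵀ * J = -(J * X) := eq_neg_of_add_eq_zero_left hX
    have hY' : Yᵀ * J = -(J * Y) := eq_neg_of_add_eq_zero_left hY
    have h1 : Yᵀ * Xᵀ * J = J * (Y * X) := by
      rw [mul_assoc, hX', mul_neg, ← mul_assoc, hY', neg_mul, neg_neg, mul_assoc]
    have h2 : Xᵀ * Yᵀ * J = J * (X * Y) := by
      rw [mul_assoc, hY', mul_neg, ← mul_assoc, hX', neg_mul, neg_neg, mul_assoc]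
    rw [Ring.lie_def, transpose_sub, transpose_mul, transpose_mul, sub_mul, h1, h2,
      mul_sub]
    abel

/-- The symmetric "boost" matrix `E(a,b) + E(b,a)` lies in `lieSO (diagonal d)`
whenever `d a = 1` and `d b = -1`. -/
lemma boost_mem_lieSO {ι : Type*} [Fintype ι] [DecidableEq ι] (d : ι → ℝ) (a b : ι)
    (ha : d a = 1) (hb : d b = -1) :
    (Matrix.single a b (1 : ℝ) + Matrix.single b a 1) ∈ lieSO (diagonal d) := by
  have hab : a ≠ b := by intro h; rw [h, hb] at ha; norm_num at ha
  show _ᵀ * _ + _ * _ = 0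
  ext i j
  simp only [transpose_add, add_mul, mul_add, Matrix.add_apply, mul_diagonal,
    diagonal_mul, transpose_apply, Matrix.zero_apply, Matrix.single, of_apply]
  split_ifs <;> simp_all

/-- The standard symplectic form matrix `J = [[0, 1], [-1, 0]]` in block form. -/
def sympJ (n : ℕ) : Matrix (Fin n ⊕ Fin n) (Fin n ⊕ Fin n) ℝ :=
  fromBlocks 0 1 (-1) 0

lemma h_mem_sp (n : ℕ) (ν : Fin n) :
    (Matrix.single (Sum.inl ν) (Sum.inl ν) (1 : ℝ) -
      Matrix.single (Sum.inr ν) (Sum.inr ν) 1) ∈ lieSO (sympJ n) := by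
  have e : Matrix.single (Sum.inl ν) (Sum.inl ν) (1 : ℝ) -
      Matrix.single (Sum.inr ν) (Sum.inr ν) 1 =
      fromBlocks (Matrix.single ν ν 1) 0 0 (-(Matrix.single ν ν 1)) := by
    ext (i | i) (j | j) <;> simp [Matrix.single, fromBlocks]
  have hDt : (Matrix.single ν ν (1 : ℝ))ᵀ = Matrix.single ν ν 1 := by
    ext i j
    simp [Matrix.single, and_comm]
  show _ᵀ * _ + _ * _ = 0
  rw [e, sympJ, fromBlocks_transpose, fromBlocks_multiply, fromBlocks_multiply,
    fromBlocks_add]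
  simp [hDt]

namespace SpEss
variable {n : ℕ}

abbrev ι2 (n : ℕ) := Fin n ⊕ Fin n

def sg : ι2 n → ι2 n := Sum.elim Sum.inr Sum.inl
def eps : ι2 n → ℝ := Sum.elim (fun _ => -1) (fun _ => 1)

lemma entry (X : Matrix (ι2 n) (ι2 n) ℝ) (i j : ι2 n) :
    (Xᵀ * sympJ n + sympJ n * X) i j = eps j * X (sg j) i - eps i * X (sg i) j := by
  rcases i with a | a <;> rcases j with b | b <;>
    simp [sympJ, Matrix.mul_apply, Fintype.sum_sum_type, fromBlocks, Matrix.one_apply,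
      sg, eps, Finset.sum_ite_eq, Finset.sum_ite_eq', mul_comm, sub_eq_neg_add] <;> ring

lemma mem_iff (X : Matrix (ι2 n) (ι2 n) ℝ) :
    X ∈ lieSO (sympJ n) ↔ ∀ i j, eps j * X (sg j) i = eps i * X (sg i) j := by
  show Xᵀ * sympJ n + sympJ n * X = 0 ↔ _
  rw [← Matrix.ext_iff]
  constructor
  · intro h i j
    have := h i j
    rw [entry] at this
    simpa [sub_eq_zero] using this
  · intro h i j
    rw [entry, Matrix.zero_apply, sub_eq_zero]
    exact h i j


variable (ν : Fin n)

def w (ν : Fin n) : ι2 n → ℝ := fun i => if i = Sum.inl ν then 1 else if i = Sum.inr ν then -1 else 0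

def hm (ν : Fin n) : Matrix (ι2 n) (ι2 n) ℝ := Matrix.diagonal (w ν)

lemma hm_eq : Matrix.single (Sum.inl ν) (Sum.inl ν) (1:ℝ) - Matrix.single (Sum.inr ν) (Sum.inr ν) 1 = hm ν := by
  ext i j
  rcases i with a | a <;> rcases j with b | b <;>
    simp [hm, w, diagonal_apply, Matrix.single, Sum.inl.injEq, Sum.inr.injEq] <;>
    split_ifs <;> simp_all <;> omega

lemma w_sg (i : ι2 n) : w ν (sg i) = - w ν i := by
  rcases i with a | a <;> simp [w, sg] <;> split_ifs <;> simp_all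

noncomputable def P (ν : Fin n) (c : ℝ) (X : Matrix (ι2 n) (ι2 n) ℝ) : Matrix (ι2 n) (ι2 n) ℝ :=
  Matrix.of fun i j => if w ν i - w ν j = c then X i j else 0

lemma P_mem (c : ℝ) {X : Matrix (ι2 n) (ι2 n) ℝ} (hX : X ∈ lieSO (sympJ n)) :
    P ν c X ∈ lieSO (sympJ n) := by
  rw [mem_iff] at hX ⊢
  intro i j
  simp only [P, Matrix.of_apply, w_sg]
  by_cases hc : -(w ν j) - w ν i = c
  · rw [if_pos hc, if_pos (by linarith)]; exact hX i j
  · rw [if_neg hc, if_neg (fun h => hc (by linarith)), mul_zero, mul_zero]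

lemma lie_diag (d : ι2 n → ℝ) (M : Matrix (ι2 n) (ι2 n) ℝ) (i j : ι2 n) :
    ⁅Matrix.diagonal d, M⁆ i j = (d i - d j) * M i j := by
  simp [Ring.lie_def, Matrix.sub_apply, diagonal_mul, mul_diagonal]
  ring

lemma lie_P (c : ℝ) (X : Matrix (ι2 n) (ι2 n) ℝ) : ⁅hm ν, P ν c X⁆ = c • P ν c X := by
  ext i j
  rw [hm, lie_diag]
  simp only [P, Matrix.smul_apply, Matrix.of_apply, smul_eq_mul]
  split_ifs with hc
  · rw [hc]
  · simp

lemma decomp (X : Matrix (ι2 n) (ι2 n) ℝ) :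
    X = P ν (-2) X + P ν (-1) X + P ν 0 X + P ν 1 X + P ν 2 X := by
  ext i j
  have ha : w ν i = 1 ∨ w ν i = -1 ∨ w ν i = 0 := by unfold w; split_ifs <;> simp
  have hb : w ν j = 1 ∨ w ν j = -1 ∨ w ν j = 0 := by unfold w; split_ifs <;> simp
  simp only [Matrix.add_apply, P, Matrix.of_apply]
  rcases ha with h | h | h <;> rcases hb with h' | h' | h' <;> rw [h, h'] <;> norm_num


def Agen (mu lam : Fin n) : Matrix (ι2 n) (ι2 n) ℝ :=
  Matrix.single (Sum.inl mu) (Sum.inl lam) 1 - Matrix.single (Sum.inr lam) (Sum.inr mu) 1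

def Bgen (mu lam : Fin n) : Matrix (ι2 n) (ι2 n) ℝ :=
  Matrix.single (Sum.inl mu) (Sum.inr lam) 1 + Matrix.single (Sum.inl lam) (Sum.inr mu) 1

def Cgen (mu lam : Fin n) : Matrix (ι2 n) (ι2 n) ℝ :=
  Matrix.single (Sum.inr mu) (Sum.inl lam) 1 + Matrix.single (Sum.inr lam) (Sum.inl mu) 1

lemma Agen_mem (mu lam : Fin n) : Agen mu lam ∈ lieSO (sympJ n) := by
  rw [mem_iff]
  intro i j
  rcases i with a | a <;> rcases j with b | b <;>
    simp [Agen, eps, sg, Matrix.single, and_comm] <;> split_ifs <;> norm_num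

lemma Bgen_mem (mu lam : Fin n) : Bgen mu lam ∈ lieSO (sympJ n) := by
  rw [mem_iff]
  intro i j
  rcases i with a | a <;> rcases j with b | b <;>
    simp [Bgen, eps, sg, Matrix.single, and_comm] <;> split_ifs <;> norm_num

lemma Cgen_mem (mu lam : Fin n) : Cgen mu lam ∈ lieSO (sympJ n) := by
  rw [mem_iff]
  intro i j
  rcases i with a | a <;> rcases j with b | b <;>
    simp [Cgen, eps, sg, Matrix.single, and_comm] <;> split_ifs <;> norm_num


lemma lie_hm_Agen_p {mu : Fin n} (hmu : mu ≠ ν) : ⁅hm ν, Agen ν mu⁆ = (1:ℝ) • Agen ν mu := by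
  ext i j
  rw [hm, lie_diag]
  rcases i with a | a <;> rcases j with b | b <;>
    simp [Agen, Matrix.single, w, Matrix.smul_apply] <;> split_ifs <;>
      first | (norm_num; done) | (subst_vars; simp_all)

lemma lie_hm_Agen_m {mu : Fin n} (hmu : mu ≠ ν) : ⁅hm ν, Agen mu ν⁆ = (-1:ℝ) • Agen mu ν := by
  ext i j
  rw [hm, lie_diag]
  rcases i with a | a <;> rcases j with b | b <;>
    simp [Agen, Matrix.single, w, Matrix.smul_apply] <;> split_ifs <;>
      first | (norm_num; done) | (subst_vars; simp_all)

lemma lie_hm_Bgen_p {mu : Fin n} (hmu : mu ≠ ν) : ⁅hm ν, Bgen ν mu⁆ = (1:ℝ) • Bgen ν mu := by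
  ext i j
  rw [hm, lie_diag]
  rcases i with a | a <;> rcases j with b | b <;>
    simp [Bgen, Matrix.single, w, Matrix.smul_apply] <;> split_ifs <;>
      first | (norm_num; done) | (subst_vars; simp_all)

lemma lie_hm_Cgen_m {mu : Fin n} (hmu : mu ≠ ν) : ⁅hm ν, Cgen mu ν⁆ = (-1:ℝ) • Cgen mu ν := by
  ext i j
  rw [hm, lie_diag]
  rcases i with a | a <;> rcases j with b | b <;>
    simp [Cgen, Matrix.single, w, Matrix.smul_apply] <;> split_ifs <;>
      first | (norm_num; done) | (subst_vars; simp_all)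

lemma lie_Agen_Agen {mu lam : Fin n} (hmu : mu ≠ ν) (hlam : lam ≠ ν) :
    ⁅Agen mu ν, Agen ν lam⁆ = Agen mu lam - (if mu = lam then hm ν else 0) := by
  by_cases h : mu = lam
  · subst h
    rw [if_pos rfl, ← hm_eq]
    simp only [Ring.lie_def, Agen, sub_mul, mul_sub, Matrix.single_mul_single_same,
      Matrix.single_mul_single_of_ne, Sum.inr.injEq, Sum.inl.injEq, hmu, Ne,
      reduceCtorEq, not_false_iff, one_mul]
    abel
  · rw [if_neg h, sub_zero]
    simp only [Ring.lie_def, Agen, sub_mul, mul_sub, Matrix.single_mul_single_same,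
      Matrix.single_mul_single_of_ne, Sum.inr.injEq, Sum.inl.injEq, hmu, h, Ne.symm h, Ne,
      reduceCtorEq, not_false_iff, one_mul]
    abel

lemma lie_Bgen_Agen {mu lam : Fin n} (hmu : mu ≠ ν) :
    ⁅Bgen ν mu, Agen lam ν⁆ = -(Bgen lam mu) := by
  simp only [Ring.lie_def, Agen, Bgen, sub_mul, mul_sub, add_mul, mul_add,
    Matrix.single_mul_single_same, Matrix.single_mul_single_of_ne, Sum.inr.injEq, Sum.inl.injEq,
    hmu, Ne.symm hmu, Ne, reduceCtorEq, not_false_iff, one_mul]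
  abel

lemma lie_Cgen_Agen {mu lam : Fin n} (hmu : mu ≠ ν) :
    ⁅Cgen mu ν, Agen ν lam⁆ = Cgen mu lam := by
  simp only [Ring.lie_def, Agen, Cgen, sub_mul, mul_sub, add_mul, mul_add,
    Matrix.single_mul_single_same, Matrix.single_mul_single_of_ne, Sum.inr.injEq, Sum.inl.injEq,
    hmu, Ne.symm hmu, Ne, reduceCtorEq, not_false_iff, one_mul]
  abel


noncomputable def Qm (ν : Fin n) (X : Matrix (ι2 n) (ι2 n) ℝ) : Matrix (ι2 n) (ι2 n) ℝ :=
  Matrix.of fun i j =>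
    if i = Sum.inl ν ∨ i = Sum.inr ν ∨ j = Sum.inl ν ∨ j = Sum.inr ν then 0 else X i j

lemma P0_eq {X : Matrix (ι2 n) (ι2 n) ℝ} (hX : X ∈ lieSO (sympJ n)) :
    P ν 0 X = X (Sum.inl ν) (Sum.inl ν) • hm ν + Qm ν X := by
  have hrel := (mem_iff X).1 hX (Sum.inl ν) (Sum.inr ν)
  simp only [eps, sg, Sum.elim_inl, Sum.elim_inr, one_mul, neg_one_mul] at hrel
  ext i j
  rcases i with a | a <;> rcases j with b | b <;>
    by_cases ha : a = ν <;> by_cases hb : b = ν <;>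
    simp_all [P, Qm, hm, w, Matrix.diagonal_apply] <;>
    (intro h'; first | exact absurd h'.symm hb | norm_num at h')

noncomputable def Acoef (ν : Fin n) (X : Matrix (ι2 n) (ι2 n) ℝ) (mu lam : Fin n) : ℝ :=
  if mu = ν ∨ lam = ν then 0 else X (Sum.inl mu) (Sum.inl lam)

noncomputable def Bcoef (ν : Fin n) (X : Matrix (ι2 n) (ι2 n) ℝ) (mu lam : Fin n) : ℝ :=
  if mu = ν ∨ lam = ν then 0 else (1/2) * X (Sum.inl mu) (Sum.inr lam)

noncomputable def Ccoef (ν : Fin n) (X : Matrix (ι2 n) (ι2 n) ℝ) (mu lam : Fin n) : ℝ :=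
  if mu = ν ∨ lam = ν then 0 else (1/2) * X (Sum.inr mu) (Sum.inl lam)

lemma Q_eq {X : Matrix (ι2 n) (ι2 n) ℝ} (hX : X ∈ lieSO (sympJ n)) :
    Qm ν X =
      (∑ mu : Fin n, ∑ lam : Fin n, Acoef ν X mu lam • Agen mu lam) +
      (∑ mu : Fin n, ∑ lam : Fin n, Bcoef ν X mu lam • Bgen mu lam) +
      (∑ mu : Fin n, ∑ lam : Fin n, Ccoef ν X mu lam • Cgen mu lam) := by
  have hB : ∀ a b : Fin n, X (Sum.inl b) (Sum.inr a) = X (Sum.inl a) (Sum.inr b) := by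
    intro a b
    have := (mem_iff X).1 hX (Sum.inr a) (Sum.inr b)
    simpa [eps, sg] using this
  have hC : ∀ a b : Fin n, X (Sum.inr b) (Sum.inl a) = X (Sum.inr a) (Sum.inl b) := by
    intro a b
    have := (mem_iff X).1 hX (Sum.inl a) (Sum.inl b)
    simpa [eps, sg] using this
  have hD : ∀ a b : Fin n, X (Sum.inl b) (Sum.inl a) = -X (Sum.inr a) (Sum.inr b) := by
    intro a b
    have := (mem_iff X).1 hX (Sum.inl a) (Sum.inr b)
    simp [eps, sg] at this
    linarith
  ext i j
  rcases i with p | p <;> rcases j with q | q <;>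
    simp [Qm, Agen, Bgen, Cgen, Matrix.sum_apply, Matrix.single, ite_and, mul_ite,
      Finset.sum_ite_eq, Finset.sum_ite_eq', Finset.sum_add_distrib] <;>
    (try simp only [Acoef, Bcoef, Ccoef]) <;>
    (try split_ifs) <;>
    first
      | rfl
      | ring1
      | tauto
      | (rw [hB p q]; ring1)
      | (rw [hC p q]; ring1)
      | (rw [hD p q]; ring1)
      | (exfalso; tauto)


section Assembly
variable (ν : Fin n)

local notation "L" => lieSO (sympJ n)

lemma hm_mem : hm ν ∈ lieSO (sympJ n) := hm_eq ν ▸ h_mem_sp n ν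

lemma Qm_mem {X : Matrix (ι2 n) (ι2 n) ℝ} (hX : X ∈ lieSO (sympJ n)) :
    Qm ν X ∈ lieSO (sympJ n) := by
  have : Qm ν X = P ν 0 X - X (Sum.inl ν) (Sum.inl ν) • hm ν := by
    rw [P0_eq ν hX]; abel
  rw [this]
  exact sub_mem (P_mem ν 0 hX) (Submodule.smul_mem _ _ (hm_mem ν))

noncomputable def mEl : L := ⟨hm ν, hm_mem ν⟩

lemma ad_apply' (y : L) : LieAlgebra.ad ℝ L (mEl ν) y = ⁅mEl ν, y⁆ := rfl

lemma eig (c : ℝ) {X : Matrix (ι2 n) (ι2 n) ℝ} (hX : X ∈ lieSO (sympJ n)) :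
    (⟨P ν c X, P_mem ν c hX⟩ : L) ∈
      Module.End.eigenspace (LieAlgebra.ad ℝ L (mEl ν)) c := by
  rw [Module.End.mem_eigenspace_iff]
  apply Subtype.ext
  show ⁅hm ν, P ν c X⁆ = c • P ν c X
  exact lie_P ν c X

lemma part1 : (⨆ c : ℝ, Module.End.eigenspace (LieAlgebra.ad ℝ L (mEl ν)) c) = ⊤ := by
  rw [eq_top_iff]
  rintro x -
  have hx : (x : Matrix (ι2 n) (ι2 n) ℝ) ∈ lieSO (sympJ n) := x.2
  have hdec : x = (⟨P ν (-2) x, P_mem ν _ hx⟩ : L) + ⟨P ν (-1) x, P_mem ν _ hx⟩ +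
      ⟨P ν 0 x, P_mem ν _ hx⟩ + ⟨P ν 1 x, P_mem ν _ hx⟩ + ⟨P ν 2 x, P_mem ν _ hx⟩ := by
    apply Subtype.ext
    push_cast
    exact decomp ν x
  rw [hdec]
  refine add_mem (add_mem (add_mem (add_mem ?_ ?_) ?_) ?_) ?_ <;>
    exact Submodule.mem_iSup_of_mem _ (eig ν _ hx)


lemma part2 :
    Submodule.span ℝ {mEl ν} ⊔ LinearMap.range (LieAlgebra.ad ℝ L (mEl ν)) ⊔
      bracketSpan (LinearMap.range (LieAlgebra.ad ℝ L (mEl ν)))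
        (LinearMap.range (LieAlgebra.ad ℝ L (mEl ν))) = ⊤ := by
  set R := LinearMap.range (LieAlgebra.ad ℝ L (mEl ν)) with hR
  set V := Submodule.span ℝ {mEl ν} ⊔ R ⊔ bracketSpan R R with hVdef
  rw [eq_top_iff]
  rintro x -
  have hx : (x : Matrix (ι2 n) (ι2 n) ℝ) ∈ lieSO (sympJ n) := x.2
  show x ∈ V
  have hmV : mEl ν ∈ V :=
    (le_sup_left.trans le_sup_left : Submodule.span ℝ {mEl ν} ≤ V)
      (Submodule.mem_span_singleton_self _)
  have hRV : ∀ y : L, y ∈ R → y ∈ V := fun y hy =>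
    (le_sup_right.trans le_sup_left : R ≤ V) hy
  have hBV : ∀ y : L, y ∈ bracketSpan R R → y ∈ V := fun y hy =>
    (le_sup_right : bracketSpan R R ≤ V) hy
  have hgenR : ∀ (y : L) (c : ℝ), c ≠ 0 →
      ⁅hm ν, (y : Matrix (ι2 n) (ι2 n) ℝ)⁆ = c • (y : Matrix (ι2 n) (ι2 n) ℝ) → y ∈ R := by
    intro y c hc hy
    refine ⟨c⁻¹ • y, ?_⟩
    apply Subtype.ext
    show ⁅hm ν, c⁻¹ • (y : Matrix (ι2 n) (ι2 n) ℝ)⁆ = (y : Matrix (ι2 n) (ι2 n) ℝ)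
    rw [lie_smul, hy, smul_smul, inv_mul_cancel₀ hc, one_smul]
  have hPR : ∀ (c : ℝ), c ≠ 0 →
      (⟨P ν c x, P_mem ν c hx⟩ : L) ∈ R := fun c hc =>
    hgenR _ c hc (lie_P ν c x)
  have haP : ∀ {mu : Fin n}, mu ≠ ν → (⟨Agen ν mu, Agen_mem ν mu⟩ : L) ∈ R :=
    fun {mu} hmu => hgenR _ 1 one_ne_zero (lie_hm_Agen_p ν hmu)
  have haM : ∀ {mu : Fin n}, mu ≠ ν → (⟨Agen mu ν, Agen_mem mu ν⟩ : L) ∈ R :=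
    fun {mu} hmu => hgenR _ (-1) (by norm_num) (lie_hm_Agen_m ν hmu)
  have hbP : ∀ {mu : Fin n}, mu ≠ ν → (⟨Bgen ν mu, Bgen_mem ν mu⟩ : L) ∈ R :=
    fun {mu} hmu => hgenR _ 1 one_ne_zero (lie_hm_Bgen_p ν hmu)
  have hcM : ∀ {mu : Fin n}, mu ≠ ν → (⟨Cgen mu ν, Cgen_mem mu ν⟩ : L) ∈ R :=
    fun {mu} hmu => hgenR _ (-1) (by norm_num) (lie_hm_Cgen_m ν hmu)
  have haV : ∀ {mu lam : Fin n}, mu ≠ ν → lam ≠ ν →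
      (⟨Agen mu lam, Agen_mem mu lam⟩ : L) ∈ V := by
    intro mu lam hmu hlam
    have hbr : (⁅(⟨Agen mu ν, Agen_mem mu ν⟩ : L), (⟨Agen ν lam, Agen_mem ν lam⟩ : L)⁆ : L) ∈
        bracketSpan R R :=
      Submodule.subset_span ⟨_, haM hmu, _, haP hlam, rfl⟩
    by_cases h : mu = lam
    · have he : (⟨Agen mu lam, Agen_mem mu lam⟩ : L) =
          ⁅(⟨Agen mu ν, Agen_mem mu ν⟩ : L), (⟨Agen ν lam, Agen_mem ν lam⟩ : L)⁆ + mEl ν := by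
        apply Subtype.ext
        show Agen mu lam = ⁅Agen mu ν, Agen ν lam⁆ + hm ν
        rw [lie_Agen_Agen ν hmu hlam, if_pos h]
        abel
      rw [he]
      exact add_mem (hBV _ hbr) hmV
    · have he : (⟨Agen mu lam, Agen_mem mu lam⟩ : L) =
          ⁅(⟨Agen mu ν, Agen_mem mu ν⟩ : L), (⟨Agen ν lam, Agen_mem ν lam⟩ : L)⁆ := by
        apply Subtype.ext
        show Agen mu lam = ⁅Agen mu ν, Agen ν lam⁆
        rw [lie_Agen_Agen ν hmu hlam, if_neg h, sub_zero]
      rw [he]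
      exact hBV _ hbr
  have hbV : ∀ {mu lam : Fin n}, mu ≠ ν → lam ≠ ν →
      (⟨Bgen mu lam, Bgen_mem mu lam⟩ : L) ∈ V := by
    intro mu lam hmu hlam
    have hbr : (⁅(⟨Bgen ν lam, Bgen_mem ν lam⟩ : L), (⟨Agen mu ν, Agen_mem mu ν⟩ : L)⁆ : L) ∈
        bracketSpan R R :=
      Submodule.subset_span ⟨_, hbP hlam, _, haM hmu, rfl⟩
    have he : (⟨Bgen mu lam, Bgen_mem mu lam⟩ : L) =
        -⁅(⟨Bgen ν lam, Bgen_mem ν lam⟩ : L), (⟨Agen mu ν, Agen_mem mu ν⟩ : L)⁆ := by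
      apply Subtype.ext
      show Bgen mu lam = -⁅Bgen ν lam, Agen mu ν⁆
      rw [lie_Bgen_Agen ν hlam, neg_neg]
    rw [he]
    exact neg_mem (hBV _ hbr)
  have hcV : ∀ {mu lam : Fin n}, mu ≠ ν → lam ≠ ν →
      (⟨Cgen mu lam, Cgen_mem mu lam⟩ : L) ∈ V := by
    intro mu lam hmu hlam
    have hbr : (⁅(⟨Cgen mu ν, Cgen_mem mu ν⟩ : L), (⟨Agen ν lam, Agen_mem ν lam⟩ : L)⁆ : L) ∈
        bracketSpan R R :=
      Submodule.subset_span ⟨_, hcM hmu, _, haP hlam, rfl⟩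
    have he : (⟨Cgen mu lam, Cgen_mem mu lam⟩ : L) =
        ⁅(⟨Cgen mu ν, Cgen_mem mu ν⟩ : L), (⟨Agen ν lam, Agen_mem ν lam⟩ : L)⁆ := by
      apply Subtype.ext
      show Cgen mu lam = ⁅Cgen mu ν, Agen ν lam⁆
      rw [lie_Cgen_Agen ν hmu]
    rw [he]
    exact hBV _ hbr
  have hQV : (⟨Qm ν x, Qm_mem ν hx⟩ : L) ∈ V := by
    have he : (⟨Qm ν x, Qm_mem ν hx⟩ : L) =
        (∑ mu : Fin n, ∑ lam : Fin n,
          Acoef ν x mu lam • (⟨Agen mu lam, Agen_mem mu lam⟩ : L)) +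
        (∑ mu : Fin n, ∑ lam : Fin n,
          Bcoef ν x mu lam • (⟨Bgen mu lam, Bgen_mem mu lam⟩ : L)) +
        (∑ mu : Fin n, ∑ lam : Fin n,
          Ccoef ν x mu lam • (⟨Cgen mu lam, Cgen_mem mu lam⟩ : L)) := by
      apply Subtype.ext
      push_cast [AddSubmonoidClass.coe_finset_sum]
      exact Q_eq ν hx
    rw [he]
    refine add_mem (add_mem ?_ ?_) ?_ <;>
      refine Submodule.sum_mem _ fun mu _ => Submodule.sum_mem _ fun lam _ => ?_
    · by_cases h : mu = ν ∨ lam = ν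
      · rw [show Acoef ν x mu lam = 0 from if_pos h, zero_smul]
        exact Submodule.zero_mem _
      · push_neg at h
        exact Submodule.smul_mem _ _ (haV h.1 h.2)
    · by_cases h : mu = ν ∨ lam = ν
      · rw [show Bcoef ν x mu lam = 0 from if_pos h, zero_smul]
        exact Submodule.zero_mem _
      · push_neg at h
        exact Submodule.smul_mem _ _ (hbV h.1 h.2)
    · by_cases h : mu = ν ∨ lam = ν
      · rw [show Ccoef ν x mu lam = 0 from if_pos h, zero_smul]
        exact Submodule.zero_mem _
      · push_neg at h
        exact Submodule.smul_mem _ _ (hcV h.1 h.2)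
  have hmid : (⟨P ν 0 x, P_mem ν 0 hx⟩ : L) =
      (x : Matrix (ι2 n) (ι2 n) ℝ) (Sum.inl ν) (Sum.inl ν) • mEl ν +
        ⟨Qm ν x, Qm_mem ν hx⟩ := by
    apply Subtype.ext
    push_cast
    exact P0_eq ν hx
  have hdec : x = (⟨P ν (-2) x, P_mem ν _ hx⟩ : L) + ⟨P ν (-1) x, P_mem ν _ hx⟩ +
      ⟨P ν 0 x, P_mem ν _ hx⟩ + ⟨P ν 1 x, P_mem ν _ hx⟩ + ⟨P ν 2 x, P_mem ν _ hx⟩ := by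
    apply Subtype.ext
    push_cast
    exact decomp ν x
  rw [hdec, hmid]
  refine add_mem (add_mem (add_mem (add_mem ?_ ?_) (add_mem ?_ ?_)) ?_) ?_
  · exact hRV _ (hPR _ (by norm_num))
  · exact hRV _ (hPR _ (by norm_num))
  · exact Submodule.smul_mem _ _ hmV
  · exact hQV
  · exact hRV _ (hPR _ one_ne_zero)
  · exact hRV _ (hPR _ (by norm_num))

end Assembly
end SpEss


/-- In `sp(2n,ℝ)` = { X : XᵀJ + JX = 0 } (indices split as `Fin n ⊕ Fin n`, so that
`E(ν,ν) − E(ν+n,ν+n)` becomes `E(inl ν, inl ν) − E(inr ν, inr ν)`), each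
`h_{νν} = E(ν,ν) − E(ν+n,ν+n)` is essential. -/
theorem sp_essential (n : ℕ) (hn : 1 ≤ n) (ν : Fin n) :
    Essential
      (⟨Matrix.single (Sum.inl ν) (Sum.inl ν) (1 : ℝ) -
          Matrix.single (Sum.inr ν) (Sum.inr ν) 1, h_mem_sp n ν⟩ :
        lieSO (sympJ n)) := by
  have hme : (⟨Matrix.single (Sum.inl ν) (Sum.inl ν) (1 : ℝ) -
      Matrix.single (Sum.inr ν) (Sum.inr ν) 1, h_mem_sp n ν⟩ :
        lieSO (sympJ n)) = SpEss.mEl ν := Subtype.ext (SpEss.hm_eq ν)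
  rw [hme]
  exact ⟨SpEss.part1 ν, SpEss.part2 ν⟩
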